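/- If f is a Godunova–Levin function on an interval I (nonnegative with f(λx+(1-λ)y) ≤ f(x)/λ + f(y)/(1-λ) for λ ∈ (0,1)), then for all x, y, z ∈ I: f(x)(x-y)(x-z) + f(y)(y-x)(y-z) + f(z)(z-x)(z-y) ≥ 0. -/

import Mathlib

lemma gl_key (I : Set ℝ) (f : ℝ → ℝ)
    (hnonneg : ∀ x ∈ I, 0 ≤ f x)
    (hGL : ∀ x ∈ I, ∀ y ∈ I, ∀ l : ℝ, 0 < l → l < 1 →
      f (l * x + (1 - l) * y) ≤ f x / l + f y / (1 - l))
    (a b c : ℝ) (ha : a ∈ I) (hb : b ∈ I) (hc : c ∈ I)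
    (hab : a ≤ b) (hbc : b ≤ c) :
    0 ≤ f a * (a - b) * (a - c) + f b * (b - a) * (b - c) +
      f c * (c - a) * (c - b) := by
  rcases eq_or_lt_of_le hab with h | h1
  · subst h
    nlinarith [hnonneg c hc, sq_nonneg (c - a)]
  rcases eq_or_lt_of_le hbc with h | h2
  · subst h
    nlinarith [hnonneg a ha, sq_nonneg (b - a)]
  have h3 : a < c := h1.trans h2
  have hba : (0:ℝ) < b - a := by linarith
  have hcb : (0:ℝ) < c - b := by linarith
  have hca : (0:ℝ) < c - a := by linarith
  set l : ℝ := (c - b) / (c - a) with hl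
  have hl0 : 0 < l := div_pos hcb hca
  have hl1 : l < 1 := (div_lt_one hca).mpr (by linarith)
  have h1l : 1 - l = (b - a) / (c - a) := by
    rw [hl]
    field_simp
    ring
  have heq : l * a + (1 - l) * c = b := by
    rw [h1l, hl]
    field_simp
    ring
  have hfb := hGL a ha c hc l hl0 hl1
  rw [heq] at hfb
  have e1 : f a / l + f c / (1 - l) = f a * (c - a) / (c - b) + f c * (c - a) / (b - a) := by
    rw [h1l, hl]
    field_simp
  rw [e1] at hfb
  have goal' : f b * ((b - a) * (c - b)) ≤ f a * ((c - a) * (b - a)) + f c * ((c - a) * (c - b)) := by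
    have h := mul_le_mul_of_nonneg_left hfb (mul_pos hba hcb).le
    calc f b * ((b - a) * (c - b)) = (b - a) * (c - b) * f b := by ring
    _ ≤ (b - a) * (c - b) * (f a * (c - a) / (c - b) + f c * (c - a) / (b - a)) := h
    _ = f a * ((c - a) * (b - a)) + f c * ((c - a) * (c - b)) := by
        field_simp
  linarith [goal']

theorem godunova_levin_three_point (I : Set ℝ) (hI : Convex ℝ I) (f : ℝ → ℝ)
    (hnonneg : ∀ x ∈ I, 0 ≤ f x)
    (hGL : ∀ x ∈ I, ∀ y ∈ I, ∀ l : ℝ, 0 < l → l < 1 →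
      f (l * x + (1 - l) * y) ≤ f x / l + f y / (1 - l))
    (x y z : ℝ) (hx : x ∈ I) (hy : y ∈ I) (hz : z ∈ I) :
    0 ≤ f x * (x - y) * (x - z) + f y * (y - x) * (y - z) +
      f z * (z - x) * (z - y) := by
  rcases le_total x y with h1 | h1 <;> rcases le_total y z with h2 | h2 <;>
    rcases le_total x z with h3 | h3
  · linarith [gl_key I f hnonneg hGL x y z hx hy hz h1 h2]
  · linarith [gl_key I f hnonneg hGL x y z hx hy hz h1 h2]
  · linarith [gl_key I f hnonneg hGL x z y hx hz hy h3 h2]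
  · linarith [gl_key I f hnonneg hGL z x y hz hx hy h3 h1]
  · linarith [gl_key I f hnonneg hGL y x z hy hx hz h1 h3]
  · linarith [gl_key I f hnonneg hGL y z x hy hz hx h2 h3]
  · linarith [gl_key I f hnonneg hGL x z y hx hz hy h3 h2]
  · linarith [gl_key I f hnonneg hGL z y x hz hy hx h2 h1]
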